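/- Explicit description of the domains X_ℂ(Ω) and X_ℂ(2Ω): (a) the set {t·e^{2iψ} + t⁻¹·e^{−2iψ} : t > 0, ψ ∈ ℝ, |ψ| < π/4} equals {w ∈ ℂ : Re w > 0}; (b) the set {t·e^{2iψ} + t⁻¹·e^{−2iψ} : t > 0, ψ ∈ ℝ, |ψ| < π/2} equals ℂ ∖ {w ∈ ℂ : Im w = 0 and Re w ≤ −2}. -/

import Mathlib

open Real

private lemma crown_re (t ψ : ℝ) :
    ((t : ℂ) * Complex.exp (2 * ψ * Complex.I) +
      (t : ℂ)⁻¹ * Complex.exp (-(2 * ψ) * Complex.I)).re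
      = (t + t⁻¹) * Real.cos (2 * ψ) := by
  simp [Complex.exp_re, Complex.exp_im, Complex.add_re, Complex.mul_re]
  ring

private lemma crown_im (t ψ : ℝ) :
    ((t : ℂ) * Complex.exp (2 * ψ * Complex.I) +
      (t : ℂ)⁻¹ * Complex.exp (-(2 * ψ) * Complex.I)).im
      = (t - t⁻¹) * Real.sin (2 * ψ) := by
  simp [Complex.exp_re, Complex.exp_im, Complex.add_im, Complex.mul_im]
  ring

private lemma crown_key (z : ℂ) (hz : z ≠ 0) :
    z + z⁻¹ = ((‖z‖ : ℝ) : ℂ) * Complex.exp (2 * ((z.arg / 2 : ℝ) : ℂ) * Complex.I) +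
      (((‖z‖ : ℝ) : ℂ))⁻¹ * Complex.exp (-(2 * ((z.arg / 2 : ℝ) : ℂ)) * Complex.I) := by
  have h1 : (2 * ((z.arg / 2 : ℝ) : ℂ) * Complex.I) = (z.arg : ℂ) * Complex.I := by
    push_cast; ring
  have h2 : (-(2 * ((z.arg / 2 : ℝ) : ℂ)) * Complex.I) = -((z.arg : ℂ) * Complex.I) := by
    push_cast; ring
  have hz1 : ((‖z‖ : ℝ) : ℂ) * Complex.exp ((z.arg : ℂ) * Complex.I) = z :=
    Complex.norm_mul_exp_arg_mul_I z
  rw [h1, h2, Complex.exp_neg, hz1, ← mul_inv, hz1]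

private lemma exists_crown_root (w : ℂ) : ∃ z : ℂ, z ≠ 0 ∧ w = z + z⁻¹ := by
  obtain ⟨s, hs⟩ := IsAlgClosed.exists_pow_nat_eq (w ^ 2 - 4) (n := 2) (by norm_num)
  refine ⟨(w + s) / 2, ?_, ?_⟩ <;>
  · have hmul : (w + s) / 2 * ((w - s) / 2) = 1 := by
      field_simp
      linear_combination -hs
    first
    | exact left_ne_zero_of_mul_eq_one hmul
    | · have hinv : ((w + s) / 2)⁻¹ = (w - s) / 2 := eq_inv_of_mul_eq_one_left
          (by rw [mul_comm] at hmul; exact hmul) |>.symm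
        rw [hinv]; ring

/-- Explicit description of the trace images of the domains `X_ℂ(Ω)` and `X_ℂ(2Ω)`:
(a) `{t e^{2iψ} + t⁻¹ e^{-2iψ} : t > 0, |ψ| < π/4} = {Re > 0}`;
(b) `{t e^{2iψ} + t⁻¹ e^{-2iψ} : t > 0, |ψ| < π/2} = ℂ ∖ (-∞, -2]`. -/
theorem trace_image_of_crown_domains :
    ({w : ℂ | ∃ t ψ : ℝ, 0 < t ∧ |ψ| < π / 4 ∧
        w = (t : ℂ) * Complex.exp (2 * ψ * Complex.I) +
          (t : ℂ)⁻¹ * Complex.exp (-(2 * ψ) * Complex.I)} =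
      {w : ℂ | 0 < w.re}) ∧
    ({w : ℂ | ∃ t ψ : ℝ, 0 < t ∧ |ψ| < π / 2 ∧
        w = (t : ℂ) * Complex.exp (2 * ψ * Complex.I) +
          (t : ℂ)⁻¹ * Complex.exp (-(2 * ψ) * Complex.I)} =
      {w : ℂ | w.im = 0 ∧ w.re ≤ -2}ᶜ) := by
  constructor
  · ext w
    simp only [Set.mem_setOf_eq]
    constructor
    · rintro ⟨t, ψ, ht, hψ, rfl⟩
      rw [crown_re]
      have h1 : 0 < t + t⁻¹ := by positivity
      have h2 : 0 < Real.cos (2 * ψ) := by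
        apply Real.cos_pos_of_mem_Ioo
        rw [abs_lt] at hψ
        constructor <;> [linarith; linarith]
      positivity
    · intro hw
      obtain ⟨z, hz, hwz⟩ := exists_crown_root w
      have hns : 0 < Complex.normSq z := Complex.normSq_pos.mpr hz
      have hre : 0 < z.re := by
        by_contra h
        push_neg at h
        have : w.re = z.re + z.re / Complex.normSq z := by
          rw [hwz, Complex.add_re, Complex.inv_re]
        have h2 : z.re / Complex.normSq z ≤ 0 := div_nonpos_iff.mpr (Or.inr ⟨h, hns.le⟩)
        linarith
      refine ⟨‖z‖, z.arg / 2, norm_pos_iff.mpr hz, ?_, ?_⟩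
      · have : |z.arg| < π / 2 := Complex.abs_arg_lt_pi_div_two_iff.mpr (Or.inl hre)
        rw [abs_div, abs_two]
        linarith
      · rw [hwz]; exact crown_key z hz
  · ext w
    simp only [Set.mem_setOf_eq, Set.mem_compl_iff, not_and, not_le]
    constructor
    · rintro ⟨t, ψ, ht, hψ, rfl⟩ him
      rw [crown_im] at him
      rw [crown_re]
      rw [abs_lt] at hψ
      rcases mul_eq_zero.mp him with h | h
      · have ht1 : t = 1 := by
          have ht' : t * t = 1 := by
            have := sub_eq_zero.mp h
            field_simp at this
            linarith [this]
          nlinarith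
        have hcos : -1 < Real.cos (2 * ψ) := by
          have h1 : Real.cos π < Real.cos |2 * ψ| := by
            apply Real.cos_lt_cos_of_nonneg_of_le_pi (abs_nonneg _) le_rfl
            rw [abs_lt]
            constructor <;> linarith
          rw [Real.cos_pi, Real.cos_abs] at h1
          exact h1
        rw [ht1]
        norm_num
        linarith
      · have h2ψ : 2 * ψ = 0 := by
          rw [Real.sin_eq_zero_iff_of_lt_of_lt (by linarith) (by linarith)] at h
          exact h
        rw [h2ψ, Real.cos_zero, mul_one]
        have : 0 < t + t⁻¹ := by positivity
        linarith
    · intro hw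
      obtain ⟨z, hz, hwz⟩ := exists_crown_root w
      have hns : 0 < Complex.normSq z := Complex.normSq_pos.mpr hz
      by_cases hbad : z.re < 0 ∧ z.im = 0
      · exfalso
        obtain ⟨hr, hi⟩ := hbad
        have hwim : w.im = 0 := by
          rw [hwz, Complex.add_im, Complex.inv_im, hi]
          simp
        have hnsq : Complex.normSq z = z.re * z.re := by
          rw [Complex.normSq_apply, hi]; ring
        have hwre : w.re = z.re + z.re / (z.re * z.re) := by
          rw [hwz, Complex.add_re, Complex.inv_re, hnsq]
        have hrne : z.re ≠ 0 := ne_of_lt hr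
        have : z.re / (z.re * z.re) = (z.re)⁻¹ := by field_simp
        rw [this] at hwre
        have hle : w.re ≤ -2 := by
          rw [hwre]
          have h1 : z.re * (z.re + (z.re)⁻¹ + 2) = (z.re + 1) ^ 2 := by
            field_simp; ring
          nlinarith [sq_nonneg (z.re + 1)]
        linarith [hw hwim]
      · have harg : |z.arg| < π := by
          rw [abs_lt]
          refine ⟨Complex.neg_pi_lt_arg z, lt_of_le_of_ne (Complex.arg_le_pi z) ?_⟩
          intro h
          exact hbad (Complex.arg_eq_pi_iff.mp h)
        refine ⟨‖z‖, z.arg / 2, norm_pos_iff.mpr hz, ?_, ?_⟩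
        · rw [abs_div, abs_two]
          linarith
        · rw [hwz]; exact crown_key z hz
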